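/- Let E be a real inner product space, let μ > 0, L̃ > 0, η > 0, and set σ = μ/L̃. For any g, x, z, x* ∈ E define z⁺ = (1/(1 + ησ))·(ησ·x + z − (η/L̃)·g). Then ⟨g, x* − z⁺⟩ + (μ/2)·‖x − x*‖² ≥ (L̃/(2η))·‖z − z⁺‖² + (L̃(1 + ησ)/(2η))·‖z⁺ − x*‖² − (L̃/(2η))·‖z − x*‖². -/

import Mathlib

open scoped RealInnerProductSpace

/-- **The z-update (proximal step) inequality of the DHPL-Katyusha analysis** (revised
Lemma 7 of L-Katyusha with the efficient Lipschitz constant `L̃`): in a real inner product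
space, for `μ, L̃, η > 0`, `σ = μ/L̃` and
`z⁺ = (1/(1 + ησ))·(ησ·x + z − (η/L̃)·g)`, one has
`⟨g, x* − z⁺⟩ + (μ/2)·‖x − x*‖² ≥ (L̃/(2η))·‖z − z⁺‖²
  + (L̃(1 + ησ)/(2η))·‖z⁺ − x*‖² − (L̃/(2η))·‖z − x*‖²`. -/
theorem dhpl_katyusha_z_update_inequality
    {E : Type*} [NormedAddCommGroup E] [InnerProductSpace ℝ E]
    {μ Ltil η σ : ℝ} (hμ : 0 < μ) (hL : 0 < Ltil) (hη : 0 < η)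
    (hσ : σ = μ / Ltil)
    (g x z xstar zplus : E)
    (hzplus : zplus = (1 / (1 + η * σ)) • ((η * σ) • x + z - (η / Ltil) • g)) :
    ⟪g, xstar - zplus⟫ + μ / 2 * ‖x - xstar‖ ^ 2
      ≥ Ltil / (2 * η) * ‖z - zplus‖ ^ 2
        + Ltil * (1 + η * σ) / (2 * η) * ‖zplus - xstar‖ ^ 2
        - Ltil / (2 * η) * ‖z - xstar‖ ^ 2 := by
  have hσpos : 0 < σ := hσ ▸ div_pos hμ hL
  have hc : 0 < 1 + η * σ := by positivity
  have hμσ : μ = σ * Ltil := by rw [hσ, div_mul_cancel₀ _ hL.ne']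
  -- express g in terms of the points
  have hg : g = (Ltil / η) • ((η * σ) • (x - zplus) + (z - zplus)) := by
    have h1 : (1 + η * σ) • zplus = (η * σ) • x + z - (η / Ltil) • g := by
      rw [hzplus, smul_smul]
      rw [mul_one_div, div_self hc.ne', one_smul]
    have h2 : (η / Ltil) • g = (η * σ) • (x - zplus) + (z - zplus) := by
      linear_combination (norm := module) h1
    have hone : Ltil / η * (η / Ltil) = 1 := by field_simp
    have h3 : g = (Ltil / η) • ((η / Ltil) • g) := by
      rw [smul_smul, hone, one_smul]
    rw [h3, h2]
  have hinner : ⟪g, xstar - zplus⟫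
      = Ltil / η * (η * σ * ⟪x - zplus, xstar - zplus⟫ + ⟪z - zplus, xstar - zplus⟫) := by
    rw [hg, real_inner_smul_left, inner_add_left, real_inner_smul_left]
  have e1 : ‖z - xstar‖ ^ 2
      = ‖z - zplus‖ ^ 2 - 2 * ⟪z - zplus, xstar - zplus⟫ + ‖xstar - zplus‖ ^ 2 := by
    have : z - xstar = (z - zplus) - (xstar - zplus) := by abel
    rw [this, norm_sub_sq_real]
  have e2 : ‖x - xstar‖ ^ 2
      = ‖x - zplus‖ ^ 2 - 2 * ⟪x - zplus, xstar - zplus⟫ + ‖xstar - zplus‖ ^ 2 := by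
    have : x - xstar = (x - zplus) - (xstar - zplus) := by abel
    rw [this, norm_sub_sq_real]
  have e3 : ‖zplus - xstar‖ ^ 2 = ‖xstar - zplus‖ ^ 2 := by
    rw [norm_sub_rev]
  have hr : Ltil / η * η = Ltil := div_mul_cancel₀ _ hη.ne'
  have hrpos : 0 < Ltil / η := by positivity
  have hdiv1 : Ltil / (2 * η) = (Ltil / η) / 2 := by ring
  have hdiv2 : Ltil * (1 + η * σ) / (2 * η) = (Ltil / η) * (1 + η * σ) / 2 := by ring
  have hnn : (0:ℝ) ≤ ‖x - zplus‖ ^ 2 := by positivity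
  have hkey : Ltil / η * (η * σ) = μ := by
    rw [hμσ]; field_simp
  have hinner2 : ⟪g, xstar - zplus⟫
      = μ * ⟪x - zplus, xstar - zplus⟫ + Ltil / η * ⟪z - zplus, xstar - zplus⟫ := by
    rw [hinner]; linear_combination ⟪x - zplus, xstar - zplus⟫ * hkey
  have hW : Ltil / η * (1 + η * σ) / 2 * ‖xstar - zplus‖ ^ 2
      = Ltil / η / 2 * ‖xstar - zplus‖ ^ 2 + μ / 2 * ‖xstar - zplus‖ ^ 2 := by
    linear_combination (‖xstar - zplus‖ ^ 2 / 2) * hkey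
  have hμU : 0 ≤ μ / 2 * ‖x - zplus‖ ^ 2 := by positivity
  rw [hinner2, e1, e2, e3, hdiv1, hdiv2]
  linarith [hW, hμU]
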